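/- On ℝ³ let ⟨x,y⟩₁,₂ := −x₁y₁ + x₂y₂ + x₃y₃, let SO₀(1,2) := {A ∈ GL(3,ℝ) : ⟨Ax,Ay⟩₁,₂ = ⟨x,y⟩₁,₂ for all x,y, det A = 1, A₁₁ > 0}, and let ×' be the Minkowski cross product (the antisymmetric bilinear map with e₁ ×' e₂ = e₃, e₂ ×' e₃ = −e₁, e₃ ×' e₁ = e₂). Let e₁ = (1,0,0). Then {(b ×' (A·e₁), A·e₁) : b ∈ ℝ³, A ∈ SO₀(1,2)} = {(v,u) ∈ ℝ³ × ℝ³ : ⟨u,u⟩₁,₂ = −1, u₁ > 0, ⟨u,v⟩₁,₂ = 0}. Equivalently, the group ℝ³ ⋊ SO₀(1,2), acting by (b,A)·(v,u) = (A·v + b ×' (A·u), A·u), acts transitively on the tangent bundle of the hyperbolic plane H² = {u : ⟨u,u⟩₁,₂ = −1, u₁ > 0}, which is the orbit of (0,e₁). -/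

import Mathlib

/-- The Minkowski inner product `⟨x,y⟩₁,₂ = −x₁y₁ + x₂y₂ + x₃y₃` on `ℝ³`. -/
def mdot (x y : Fin 3 → ℝ) : ℝ := -(x 0 * y 0) + x 1 * y 1 + x 2 * y 2

/-- The Minkowski cross product on `ℝ³`: `x ×' y = η (x × y)` with `η = diag(−1,1,1)`,
so that `e₁ ×' e₂ = e₃`, `e₂ ×' e₃ = −e₁`, `e₃ ×' e₁ = e₂`. -/
def mcross (x y : Fin 3 → ℝ) : Fin 3 → ℝ :=
  ![-(x 1 * y 2 - x 2 * y 1), x 2 * y 0 - x 0 * y 2, x 0 * y 1 - x 1 * y 0]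

/-- The orbit of `(0,e₁)` under the action
`(b,A)·(v,u) = (Av + b ×' (Au), Au)` of `ℝ³ ⋊ SO₀(1,2)` is exactly the tangent bundle
of the hyperbolic plane `H² = {u : ⟨u,u⟩₁,₂ = −1, u₁ > 0}`, i.e.
`{(b ×' (Ae₁), Ae₁) : b ∈ ℝ³, A ∈ SO₀(1,2)}
  = {(v,u) : ⟨u,u⟩₁,₂ = −1, u₁ > 0, ⟨u,v⟩₁,₂ = 0}`. -/
theorem stmt17 :
    {p : (Fin 3 → ℝ) × (Fin 3 → ℝ) |
      ∃ (b : Fin 3 → ℝ) (A : Matrix (Fin 3) (Fin 3) ℝ),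
        (∀ x y : Fin 3 → ℝ, mdot (A.mulVec x) (A.mulVec y) = mdot x y) ∧
        A.det = 1 ∧ 0 < A 0 0 ∧
        p = (mcross b (A.mulVec ![1, 0, 0]), A.mulVec ![1, 0, 0])} =
    {p : (Fin 3 → ℝ) × (Fin 3 → ℝ) |
      mdot p.2 p.2 = -1 ∧ 0 < p.2 0 ∧ mdot p.2 p.1 = 0} := by
  ext p
  simp only [Set.mem_setOf_eq]
  constructor
  · rintro ⟨b, A, hL, hdet, hpos, hp⟩
    have he : mdot (A.mulVec ![1, 0, 0]) (A.mulVec ![1, 0, 0]) = -1 := by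
      rw [hL]
      simp [mdot]
    have h0 : (A.mulVec ![1, 0, 0]) 0 = A 0 0 := by
      simp [Matrix.mulVec, dotProduct, Fin.sum_univ_three]
    refine ⟨?_, ?_, ?_⟩
    · rw [hp]; exact he
    · rw [hp]; simpa [h0] using hpos
    · rw [hp]
      simp only [mdot, mcross, Matrix.cons_val_zero, Matrix.cons_val_one, Matrix.head_cons,
        Matrix.cons_val_two, Matrix.tail_cons]
      ring
  · rintro ⟨hu, hpos, hv⟩
    simp only [mdot] at hu hv
    have hd : (1 + p.2 0) ≠ 0 := by nlinarith
    have hk : (2 * p.2 0 ^ 2 - 1) ≠ 0 := by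
      nlinarith [sq_nonneg (p.2 1), sq_nonneg (p.2 2)]
    refine ⟨![(p.2 1 * p.1 2 - p.2 2 * p.1 1) / (2 * p.2 0 ^ 2 - 1),
        (-(p.2 2 * p.1 0) - p.2 0 * p.1 2) / (2 * p.2 0 ^ 2 - 1),
        (p.2 0 * p.1 1 + p.2 1 * p.1 0) / (2 * p.2 0 ^ 2 - 1)],
      Matrix.of ![![p.2 0, p.2 1, p.2 2],
        ![p.2 1, 1 + p.2 1 * p.2 1 / (1 + p.2 0), p.2 1 * p.2 2 / (1 + p.2 0)],
        ![p.2 2, p.2 1 * p.2 2 / (1 + p.2 0), 1 + p.2 2 * p.2 2 / (1 + p.2 0)]],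
      ?_, ?_, ?_, ?_⟩
    · intro x y
      simp only [mdot, Matrix.mulVec, dotProduct, Fin.sum_univ_three,
        Matrix.of_apply, Matrix.cons_val', Matrix.cons_val_zero, Matrix.cons_val_one,
        Matrix.head_cons, Matrix.empty_val', Matrix.cons_val_fin_one, Matrix.head_fin_const,
        Matrix.cons_val_two, Matrix.tail_cons]
      field_simp
      linear_combination (x 0 * y 0 + p.2 2 * x 2 * y 0 + p.2 2 * x 0 * y 2
        + p.2 2 * p.2 2 * x 2 * y 2 + p.2 1 * x 1 * y 0 + p.2 1 * x 0 * y 1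
        + p.2 1 * p.2 2 * x 2 * y 1 + p.2 1 * p.2 2 * x 1 * y 2
        + p.2 1 * p.2 1 * x 1 * y 1 + 2 * p.2 0 * x 0 * y 0
        + p.2 0 * p.2 2 * x 2 * y 0 + p.2 0 * p.2 2 * x 0 * y 2
        + p.2 0 * p.2 1 * x 1 * y 0 + p.2 0 * p.2 1 * x 0 * y 1
        + p.2 0 * p.2 0 * x 0 * y 0) * hu
    · simp only [Matrix.det_fin_three, Matrix.of_apply, Matrix.cons_val', Matrix.cons_val_zero,
        Matrix.cons_val_one, Matrix.head_cons, Matrix.empty_val', Matrix.cons_val_fin_one,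
        Matrix.cons_val_two, Matrix.tail_cons, Matrix.head_fin_const]
      field_simp
      linear_combination (-(1 + p.2 0)) * hu
    · show 0 < p.2 0
      exact hpos
    · have hcol : (Matrix.of ![![p.2 0, p.2 1, p.2 2],
          ![p.2 1, 1 + p.2 1 * p.2 1 / (1 + p.2 0), p.2 1 * p.2 2 / (1 + p.2 0)],
          ![p.2 2, p.2 1 * p.2 2 / (1 + p.2 0), 1 + p.2 2 * p.2 2 / (1 + p.2 0)]]).mulVec
          ![1, 0, 0] = p.2 := by
        funext i
        fin_cases i <;>
          simp [Matrix.mulVec, dotProduct, Fin.sum_univ_three]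
      rw [hcol]
      have hb : mcross ![(p.2 1 * p.1 2 - p.2 2 * p.1 1) / (2 * p.2 0 ^ 2 - 1),
          (-(p.2 2 * p.1 0) - p.2 0 * p.1 2) / (2 * p.2 0 ^ 2 - 1),
          (p.2 0 * p.1 1 + p.2 1 * p.1 0) / (2 * p.2 0 ^ 2 - 1)] p.2 = p.1 := by
        funext i
        fin_cases i <;>
          simp only [Fin.zero_eta, Fin.mk_one, Fin.reduceFinMk, mcross, Matrix.cons_val_zero, Matrix.cons_val_one, Matrix.head_cons,
            Matrix.cons_val_two, Matrix.tail_cons] <;>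
          field_simp [hk, show p.2 0 ^ 2 * 2 - 1 ≠ 0 by rw [mul_comm]; exact hk]
        · linear_combination p.1 0 * hu + p.2 0 * hv
        · linear_combination p.1 1 * hu - p.2 1 * hv
        · linear_combination p.1 2 * hu - p.2 2 * hv
      rw [hb]
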